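/- arXiv:1905.10624 — 2 statements merged into one kernel-verified Lean document; each statement's English description precedes it below -/
import Mathlib

section
/- Let F_opt ∈ ℂ^{N×M} and let F_BB ∈ ℂ^{r×M} satisfy F_BB F_BBᴴ = I_r. Set C = F_opt F_BBᴴ ∈ ℂ^{N×r} and define F* ∈ ℂ^{N×r} entrywise by F*(i,j) = C(i,j) if |C(i,j)| ≤ 2 and F*(i,j) = 2·C(i,j)/|C(i,j)| otherwise. Then F* is a global minimizer of ‖F_opt − F_RF·F_BB‖_F² over all F_RF ∈ ℂ^{N×r} satisfying the entrywise amplitude constraint |F_RF(i,j)| ≤ 2; that is, every F_RF with |F_RF(i,j)| ≤ 2 for all i,j satisfies ‖F_opt − F*·F_BB‖_F² ≤ ‖F_opt − F_RF·F_BB‖_F². -/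
open Matrix BigOperators

noncomputable def clipTwo {N M r : ℕ} (Fopt : Matrix (Fin N) (Fin M) ℂ)
    (FBB : Matrix (Fin r) (Fin M) ℂ) : Matrix (Fin N) (Fin r) ℂ :=
  Matrix.of fun i j =>
    if ‖(Fopt * FBBᴴ) i j‖ ≤ 2 then (Fopt * FBBᴴ) i j
    else (2 : ℂ) * (Fopt * FBBᴴ) i j / (‖(Fopt * FBBᴴ) i j‖ : ℂ)


lemma sumSq_eq_trace {n m : ℕ} (M : Matrix (Fin n) (Fin m) ℂ) :
    ∑ i, ∑ j, ‖M i j‖ ^ 2 = (Matrix.trace (M * Mᴴ)).re := by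
  simp [Matrix.trace, Matrix.mul_apply, Matrix.diag, Complex.mul_conj,
    Complex.sq_norm, Complex.re_sum]

lemma trace_key {N M r : ℕ} (Fopt : Matrix (Fin N) (Fin M) ℂ)
    (FBB : Matrix (Fin r) (Fin M) ℂ) (hBB : FBB * FBBᴴ = 1)
    (X : Matrix (Fin N) (Fin r) ℂ) :
    Matrix.trace ((Fopt - X * FBB) * (Fopt - X * FBB)ᴴ)
      = Matrix.trace (Fopt * Foptᴴ) - Matrix.trace ((Fopt * FBBᴴ) * (Fopt * FBBᴴ)ᴴ)
        + Matrix.trace ((Fopt * FBBᴴ - X) * (Fopt * FBBᴴ - X)ᴴ) := by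
  have hX : X * FBB * (X * FBB)ᴴ = X * Xᴴ := by
    rw [conjTranspose_mul, Matrix.mul_assoc, ← Matrix.mul_assoc FBB, hBB,
      Matrix.one_mul]
  have hC : (Fopt * FBBᴴ) * (Fopt * FBBᴴ)ᴴ = Fopt * FBBᴴ * FBB * Foptᴴ := by
    rw [conjTranspose_mul, conjTranspose_conjTranspose, Matrix.mul_assoc,
      Matrix.mul_assoc, Matrix.mul_assoc]
  have h1 : (Fopt * FBBᴴ) * Xᴴ = Fopt * (X * FBB)ᴴ := by
    rw [conjTranspose_mul, ← Matrix.mul_assoc]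
  have h2 : X * (Fopt * FBBᴴ)ᴴ = (X * FBB) * Foptᴴ := by
    rw [conjTranspose_mul, conjTranspose_conjTranspose, Matrix.mul_assoc]
  simp only [conjTranspose_sub, Matrix.sub_mul, Matrix.mul_sub, trace_sub,
    hX, hC, h1, h2]
  ring

lemma clip_opt (c x : ℂ) (hx : ‖x‖ ≤ 2) :
    ‖c - (if ‖c‖ ≤ 2 then c
      else 2 * c / (‖c‖ : ℂ))‖ ^ 2 ≤ ‖c - x‖ ^ 2 := by
  split_ifs with h
  · rw [sub_self, norm_zero]
    simp [sq_nonneg]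
  · push_neg at h
    have ha : (0:ℝ) < ‖c‖ := lt_trans two_pos h
    have hne : (‖c‖ : ℂ) ≠ 0 := by
      exact_mod_cast ne_of_gt ha
    have hval : c - 2 * c / (‖c‖ : ℂ)
        = c * (((‖c‖ - 2) / ‖c‖ : ℝ) : ℂ) := by
      push_cast
      field_simp
    have habs : ‖c - 2 * c / (‖c‖ : ℂ)‖
        = ‖c‖ - 2 := by
      rw [hval, norm_mul, Complex.norm_real, Real.norm_eq_abs, abs_of_nonneg
        (div_nonneg (by linarith) ha.le)]
      field_simp
    rw [habs]
    have h1 : ‖c‖ - 2 ≤ ‖c - x‖ := by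
      have h2 := norm_add_le (c - x) x
      rw [sub_add_cancel] at h2
      linarith
    have h0 : (0:ℝ) ≤ ‖c‖ - 2 := by linarith
    exact pow_le_pow_left₀ h0 h1 2

/-- Closed-form RF-only precoding with the DPS implementation: for a
semi-orthogonal baseband precoder `F_BB` (`F_BB · F_BBᴴ = I`), the entrywise
clipping of `F_opt · F_BBᴴ` at amplitude 2 globally minimizes
`‖F_opt − F_RF · F_BB‖_F²` over all `F_RF` with `|F_RF(i,j)| ≤ 2`. -/
theorem rf_only_precoding_optimal (N M r : ℕ)
    (Fopt : Matrix (Fin N) (Fin M) ℂ) (FBB : Matrix (Fin r) (Fin M) ℂ)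
    (hBB : FBB * FBBᴴ = 1) :
    ∀ FRF : Matrix (Fin N) (Fin r) ℂ, (∀ i j, ‖FRF i j‖ ≤ 2) →
      ∑ i, ∑ j, ‖(Fopt - clipTwo Fopt FBB * FBB) i j‖ ^ 2
      ≤ ∑ i, ∑ j, ‖(Fopt - FRF * FBB) i j‖ ^ 2 := by
  intro FRF hFRF
  rw [sumSq_eq_trace, sumSq_eq_trace, trace_key Fopt FBB hBB,
    trace_key Fopt FBB hBB, Complex.add_re, Complex.add_re]
  apply add_le_add_right
  rw [← sumSq_eq_trace, ← sumSq_eq_trace]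
  apply Finset.sum_le_sum
  intro i _
  apply Finset.sum_le_sum
  intro j _
  have : (Fopt * FBBᴴ - clipTwo Fopt FBB) i j
      = (Fopt * FBBᴴ) i j - (if ‖(Fopt * FBBᴴ) i j‖ ≤ 2
          then (Fopt * FBBᴴ) i j
          else 2 * (Fopt * FBBᴴ) i j / (‖(Fopt * FBBᴴ) i j‖ : ℂ)) := by
    simp [clipTwo, Matrix.sub_apply]
  rw [this, Matrix.sub_apply]
  exact clip_opt _ _ (hFRF i j)
end

section
/- Let F ∈ ℂ^{n×m}, let g : {1,…,n} → {1,…,k} be any mapping from antennas to RF chains, and for each row index i let y_i ∈ ℂ^m denote the transpose of the i-th row of F. Then there exist F_RF ∈ ℂ^{n×k} with F_RF(i,j) = 0 whenever j ≠ g(i), and F_BB ∈ ℂ^{k×m}, such that ‖F − F_RF·F_BB‖_F² = ‖F‖_F² − ∑_{j=1}^{k} λ_max(∑_{i : g(i)=j} y_i y_iᴴ). Namely, taking the j-th row of F_BB to be (the conjugate transpose of) a top eigenvector x_j of ∑_{i : g(i)=j} y_i y_iᴴ and F_RF(i,g(i)) = (x_{g(i)}ᴴ y_i)/‖x_{g(i)}‖₂²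 attains this value, so the optimal fixed-mapping partially-connected hybrid precoding objective equals ‖F‖_F² minus the sum of the largest eigenvalues of the per-RF-chain covariance matrices. -/
open Matrix BigOperators

/-- The rank-one matrix `y yᴴ` with `(j,k)` entry `y_j · conj(y_k)`. -/
def outerSelf {m : ℕ} (y : Fin m → ℂ) : Matrix (Fin m) (Fin m) ℂ :=
  Matrix.of fun j k => y j * (starRingEnd ℂ) (y k)

/-- The largest eigenvalue of a Hermitian matrix. -/
noncomputable def lamMax {m : ℕ} {G : Matrix (Fin m) (Fin m) ℂ}
    (hG : G.IsHermitian) : ℝ :=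
  ⨆ t, hG.eigenvalues t

private lemma conj_mul_self' (z : ℂ) :
    (starRingEnd ℂ) z * z = (Complex.normSq z : ℂ) := by
  rw [mul_comm]; exact Complex.mul_conj z

private lemma abs_sq_sum {m : ℕ} (w : Fin m → ℂ) :
    ∑ l, ‖w l‖ ^ 2 = (∑ l, (starRingEnd ℂ) (w l) * w l).re := by
  rw [Complex.re_sum]
  exact Finset.sum_congr rfl fun l _ => by
    rw [conj_mul_self', Complex.ofReal_re, Complex.sq_norm]

/-- Per-row residual identity: projecting `y` onto the unit vector `v`. -/
private lemma row_residual {m : ℕ} (y v : Fin m → ℂ)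
    (hv : ∑ l, (starRingEnd ℂ) (v l) * v l = 1) :
    ∑ l, ‖y l - (∑ l', (starRingEnd ℂ) (v l') * y l') * v l‖ ^ 2
      = ∑ l, ‖y l‖ ^ 2
        - Complex.normSq (∑ l', (starRingEnd ℂ) (v l') * y l') := by
  set c : ℂ := ∑ l', (starRingEnd ℂ) (v l') * y l' with hc
  have hconj : ∑ l, (starRingEnd ℂ) (y l) * v l = (starRingEnd ℂ) c := by
    rw [hc, map_sum]
    exact Finset.sum_congr rfl fun l _ => by
      simp only [_root_.map_mul, Complex.conj_conj]; ring
  have key : ∑ l, (starRingEnd ℂ) (y l - c * v l) * (y l - c * v l)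
      = ∑ l, (starRingEnd ℂ) (y l) * y l - (starRingEnd ℂ) c * c := by
    have expand : ∀ l, (starRingEnd ℂ) (y l - c * v l) * (y l - c * v l)
        = (starRingEnd ℂ) (y l) * y l
          - (starRingEnd ℂ) c * ((starRingEnd ℂ) (v l) * y l)
          - c * ((starRingEnd ℂ) (y l) * v l)
          + ((starRingEnd ℂ) c * c) * ((starRingEnd ℂ) (v l) * v l) := by
      intro l; simp only [map_sub, _root_.map_mul]; ring
    simp only [expand, Finset.sum_add_distrib, Finset.sum_sub_distrib,
      ← Finset.mul_sum]
    rw [← hc, hconj, hv, mul_one]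
    ring
  rw [abs_sq_sum, abs_sq_sum, key, Complex.sub_re, conj_mul_self',
    Complex.ofReal_re]

/-- Fiberwise eigenvalue identity. -/
private lemma fiber_sum {m n : ℕ} (s : Finset (Fin n)) (y : Fin n → Fin m → ℂ)
    (x : Fin m → ℂ) (lam : ℝ)
    (hx : ∑ l, (starRingEnd ℂ) (x l) * x l = 1)
    (heig : (∑ i ∈ s, outerSelf (y i)) *ᵥ x = lam • x) :
    ∑ i ∈ s, Complex.normSq (∑ l, (starRingEnd ℂ) (x l) * y i l) = lam := by
  have key : (↑(∑ i ∈ s, Complex.normSq (∑ l, (starRingEnd ℂ) (x l) * y i l)) : ℂ)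
      = (lam : ℂ) := by
    push_cast
    have step1 : ∀ i, (↑(Complex.normSq (∑ l, (starRingEnd ℂ) (x l) * y i l)) : ℂ)
        = ∑ l', ∑ l, ((starRingEnd ℂ) (x l') * y i l')
            * (x l * (starRingEnd ℂ) (y i l)) := by
      intro i
      rw [← Complex.mul_conj, ← Finset.sum_mul_sum]
      congr 1
      rw [map_sum]
      exact Finset.sum_congr rfl fun l _ => by
        simp only [_root_.map_mul, Complex.conj_conj]
    calc ∑ i ∈ s, (↑(Complex.normSq (∑ l, (starRingEnd ℂ) (x l) * y i l)) : ℂ)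
        = ∑ i ∈ s, ∑ l', ∑ l, ((starRingEnd ℂ) (x l') * y i l')
            * (x l * (starRingEnd ℂ) (y i l)) :=
          Finset.sum_congr rfl fun i _ => step1 i
      _ = ∑ l', (starRingEnd ℂ) (x l')
            * ∑ l, (∑ i ∈ s, y i l' * (starRingEnd ℂ) (y i l)) * x l := by
          rw [Finset.sum_comm]
          refine Finset.sum_congr rfl fun l' _ => ?_
          rw [Finset.mul_sum, Finset.sum_comm]
          refine Finset.sum_congr rfl fun l _ => ?_
          rw [Finset.sum_mul, Finset.mul_sum]
          refine Finset.sum_congr rfl fun i _ => ?_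
          ring
      _ = ∑ l', (starRingEnd ℂ) (x l') * ((∑ i ∈ s, outerSelf (y i)) *ᵥ x) l' := by
          refine Finset.sum_congr rfl fun l' _ => ?_
          congr 1
          simp only [Matrix.mulVec, dotProduct, Matrix.sum_apply,
            outerSelf, Matrix.of_apply]
      _ = (lam : ℂ) := by
          rw [heig]
          simp only [Pi.smul_apply, Complex.real_smul]
          calc ∑ l', (starRingEnd ℂ) (x l') * ((lam : ℂ) * x l')
              = (lam : ℂ) * ∑ l', (starRingEnd ℂ) (x l') * x l' := by
                rw [Finset.mul_sum]
                exact Finset.sum_congr rfl fun l' _ => by ring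
            _ = (lam : ℂ) := by rw [hx, mul_one]
  exact_mod_cast key

/-- Attainment for fixed-mapping partially-connected hybrid precoding: there
exist `F_RF` (with `F_RF(i,j) = 0` for `j ≠ g i`) and `F_BB` achieving
`‖F − F_RF·F_BB‖_F² = ‖F‖_F² − ∑ⱼ λ_max(∑_{i:g i=j} yᵢ yᵢᴴ)`, where `yᵢ` is the
transpose of the `i`-th row of `F`. -/
theorem partially_connected_attained (n m k : ℕ)
    (F : Matrix (Fin n) (Fin m) ℂ) (g : Fin n → Fin k)
    (hG : ∀ j, (∑ i ∈ Finset.univ.filter (fun i => g i = j),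
        outerSelf (fun l => F i l)).IsHermitian) :
    ∃ (FRF : Matrix (Fin n) (Fin k) ℂ) (FBB : Matrix (Fin k) (Fin m) ℂ),
      (∀ i j, j ≠ g i → FRF i j = 0) ∧
      ∑ i, ∑ l, ‖(F - FRF * FBB) i l‖ ^ 2
        = (∑ i, ∑ l, ‖F i l‖ ^ 2) - ∑ j, lamMax (hG j) := by
  rcases Nat.eq_zero_or_pos m with hm | hm
  · subst hm
    refine ⟨0, 0, fun i j _ => rfl, ?_⟩
    have hlam : ∀ j, lamMax (hG j) = 0 := fun j => by
      rw [lamMax, Real.iSup_of_isEmpty]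
    simp [hlam]
  · haveI : NeZero m := ⟨hm.ne'⟩
    have hlam : ∀ j, ∃ t, lamMax (hG j) = (hG j).eigenvalues t := by
      intro j
      obtain ⟨t, ht⟩ := Finite.exists_max ((hG j).eigenvalues)
      exact ⟨t, le_antisymm (ciSup_le ht) (le_ciSup (Finite.bddAbove_range _) t)⟩
    choose t ht using hlam
    set x : Fin k → Fin m → ℂ := fun j => ⇑((hG j).eigenvectorBasis (t j)) with hxdef
    have hxnorm : ∀ j, ∑ l, (starRingEnd ℂ) (x j l) * x j l = 1 := by
      intro j
      have h1 : ‖(hG j).eigenvectorBasis (t j)‖ = 1 :=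
        ((hG j).eigenvectorBasis.orthonormal).1 (t j)
      have h2 : (inner ℂ ((hG j).eigenvectorBasis (t j)) ((hG j).eigenvectorBasis (t j)) : ℂ)
          = (↑‖(hG j).eigenvectorBasis (t j)‖ : ℂ) ^ 2 := inner_self_eq_norm_sq_to_K _
      rw [h1] at h2
      rw [PiLp.inner_apply] at h2
      simpa [hxdef, Complex.conj_mul'] using h2
    have heig : ∀ j, (∑ i ∈ Finset.univ.filter (fun i => g i = j),
        outerSelf (fun l => F i l)) *ᵥ x j = lamMax (hG j) • x j := by
      intro j
      rw [ht j]
      exact (hG j).mulVec_eigenvectorBasis (t j)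
    set c : Fin n → ℂ := fun i => ∑ l, (starRingEnd ℂ) (x (g i) l) * F i l with hcdef
    refine ⟨Matrix.of fun i j => if j = g i then c i else 0,
      Matrix.of fun j l => x j l, fun i j hj => if_neg hj, ?_⟩
    have hprod : ∀ i l, ((Matrix.of fun i j => if j = g i then c i else 0) *
        (Matrix.of fun j l => x j l)) i l = c i * x (g i) l := by
      intro i l
      simp [Matrix.mul_apply, ite_mul, Finset.sum_ite_eq]
    have hrow : ∀ i, ∑ l, ‖(F - (Matrix.of fun i j => if j = g i then c i else 0) *
        (Matrix.of fun j l => x j l)) i l‖ ^ 2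
        = ∑ l, ‖F i l‖ ^ 2 - Complex.normSq (c i) := by
      intro i
      have := row_residual (fun l => F i l) (x (g i)) (hxnorm (g i))
      simp only [Matrix.sub_apply, hprod]
      rw [hcdef]
      exact this
    rw [Finset.sum_congr rfl fun i _ => hrow i, Finset.sum_sub_distrib]
    congr 1
    rw [← Finset.sum_fiberwise Finset.univ g fun i => Complex.normSq (c i)]
    refine Finset.sum_congr rfl fun j _ => ?_
    have hfix : ∀ i ∈ Finset.univ.filter (fun i => g i = j),
        Complex.normSq (c i) = Complex.normSq (∑ l, (starRingEnd ℂ) (x j l) * F i l) := by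
      intro i hi
      rw [Finset.mem_filter] at hi
      rw [hcdef]
      simp [hi.2]
    rw [Finset.sum_congr rfl hfix]
    exact fiber_sum _ (fun i l => F i l) (x j) (lamMax (hG j)) (hxnorm j) (heig j)
end
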